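/- arXiv:1112.3422 — 3 statements merged into one kernel-verified Lean document; each statement's English description precedes it below -/
import Mathlib

section
/- For each real s, the 8-dimensional Lie algebra n_s defined by [x₂,x₃]=e^{-s}x₄, [x₁,x₃]=e^{s}x₅, [x₁,x₂]=x₆, [x₂,x₆]=e^{s}x₇, [x₃,x₄]=e^{-s}x₇, [x₁,x₆]=e^{-s}x₈, [x₂,x₄]=x₈, [x₃,x₅]=e^{s}x₈ is three-step nilpotent: its lower central series satisfies n_s^(2) = span{x₄,…,x₈}, n_s^(3) = span{x₇,x₈}, and n_s^(4) = 0. -/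
open Real in
/-- Brackets of basis vectors `[xᵢ, xⱼ]` (for `i < j`) of the 8-dimensional
Lie algebra `n_s`, with `x₁,…,x₈` identified with `Pi.single 0 1, …, Pi.single 7 1`. -/
noncomputable def sc8 (s : ℝ) (i j : Fin 8) : Fin 8 → ℝ :=
  if i = 1 ∧ j = 2 then exp (-s) • (Pi.single 3 1 : Fin 8 → ℝ)
  else if i = 0 ∧ j = 2 then exp s • (Pi.single 4 1 : Fin 8 → ℝ)
  else if i = 0 ∧ j = 1 then (Pi.single 5 1 : Fin 8 → ℝ)
  else if i = 1 ∧ j = 5 then exp s • (Pi.single 6 1 : Fin 8 → ℝ)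
  else if i = 2 ∧ j = 3 then exp (-s) • (Pi.single 6 1 : Fin 8 → ℝ)
  else if i = 0 ∧ j = 5 then exp (-s) • (Pi.single 7 1 : Fin 8 → ℝ)
  else if i = 1 ∧ j = 3 then (Pi.single 7 1 : Fin 8 → ℝ)
  else if i = 2 ∧ j = 4 then exp s • (Pi.single 7 1 : Fin 8 → ℝ)
  else 0

/-- Skew-symmetrized structure constants. -/
noncomputable def bb8 (s : ℝ) (i j : Fin 8) : Fin 8 → ℝ := sc8 s i j - sc8 s j i

/-- The skew-symmetric bilinear extension of the bracket relations of `n_s`. -/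
noncomputable def bracket8 (s : ℝ) (u v : Fin 8 → ℝ) : Fin 8 → ℝ :=
  ∑ i : Fin 8, ∑ j : Fin 8, (u i * v j) • bb8 s i j

/-- The lower central series of `n_s`: `lcs8 s 0 = n_s⁽¹⁾ = n_s`,
`lcs8 s n = n_s⁽ⁿ⁺¹⁾`. -/
noncomputable def lcs8 (s : ℝ) : ℕ → Submodule ℝ (Fin 8 → ℝ)
  | 0 => ⊤
  | n + 1 => Submodule.span ℝ
      {z : Fin 8 → ℝ | ∃ u : Fin 8 → ℝ, ∃ v ∈ lcs8 s n, z = bracket8 s u v}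

lemma brk_single (s : ℝ) (a b : Fin 8) (c d : ℝ) :
    bracket8 s (Pi.single a c) (Pi.single b d) = (c*d) • bb8 s a b := by
  simp [bracket8, Pi.single_apply, ite_mul, mul_ite, zero_mul, mul_zero,
    ite_smul, zero_smul, Finset.sum_ite_eq]

/-- For each real `s`, `n_s` is three-step nilpotent with
`n_s⁽²⁾ = span{x₄,…,x₈}`, `n_s⁽³⁾ = span{x₇,x₈}` and `n_s⁽⁴⁾ = 0`. -/
theorem stmt5 (s : ℝ) :
    lcs8 s 1 = Submodule.span ℝ
        ({Pi.single 3 1, Pi.single 4 1, Pi.single 5 1, Pi.single 6 1,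
          Pi.single 7 1} : Set (Fin 8 → ℝ)) ∧
    lcs8 s 2 = Submodule.span ℝ
        ({Pi.single 6 1, Pi.single 7 1} : Set (Fin 8 → ℝ)) ∧
    lcs8 s 3 = ⊥ := by
  set W := Submodule.span ℝ
      ({Pi.single 3 1, Pi.single 4 1, Pi.single 5 1, Pi.single 6 1,
        Pi.single 7 1} : Set (Fin 8 → ℝ)) with hWdef
  set V := Submodule.span ℝ
      ({Pi.single 6 1, Pi.single 7 1} : Set (Fin 8 → ℝ)) with hVdef
  have bb_memW : ∀ i j : Fin 8, bb8 s i j ∈ W := by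
    intro i j
    fin_cases i <;> fin_cases j <;> simp [bb8, sc8] <;>
      first
        | exact Submodule.smul_mem _ _ (Submodule.subset_span (by simp))
        | exact Submodule.neg_mem _
            (Submodule.smul_mem _ _ (Submodule.subset_span (by simp)))
        | exact Submodule.subset_span (by simp)
        | exact Submodule.neg_mem _ (Submodule.subset_span (by simp))
  have bb_memV : ∀ i j : Fin 8, 3 ≤ j.val → bb8 s i j ∈ V := by
    intro i j hj
    fin_cases i <;> fin_cases j <;> simp at hj <;> simp [bb8, sc8] <;>
      first
        | exact Submodule.smul_mem _ _ (Submodule.subset_span (by simp))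
        | exact Submodule.neg_mem _
            (Submodule.smul_mem _ _ (Submodule.subset_span (by simp)))
        | exact Submodule.subset_span (by simp)
        | exact Submodule.neg_mem _ (Submodule.subset_span (by simp))
  have bb_zero : ∀ i j : Fin 8, 6 ≤ j.val → bb8 s i j = 0 := by
    intro i j hj
    fin_cases i <;> fin_cases j <;> simp at hj <;> simp [bb8, sc8]
  have hWv : ∀ v ∈ W, v 0 = 0 ∧ v 1 = 0 ∧ v 2 = 0 := by
    intro v hv
    induction hv using Submodule.span_induction with
    | mem x hx =>
        simp only [Set.mem_insert_iff, Set.mem_singleton_iff] at hx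
        rcases hx with rfl|rfl|rfl|rfl|rfl <;>
          refine ⟨?_, ?_, ?_⟩ <;> simp [Pi.single_apply]
    | zero => simp
    | add x y _ _ hx hy =>
        exact ⟨by simp [hx.1, hy.1], by simp [hx.2.1, hy.2.1],
          by simp [hx.2.2, hy.2.2]⟩
    | smul a x _ hx =>
        exact ⟨by simp [hx.1], by simp [hx.2.1], by simp [hx.2.2]⟩
  have hVv : ∀ v ∈ V, ∀ j : Fin 8, j.val ≤ 5 → v j = 0 := by
    intro v hv
    induction hv using Submodule.span_induction with
    | mem x hx =>
        simp only [Set.mem_insert_iff, Set.mem_singleton_iff] at hx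
        rcases hx with rfl|rfl <;> intro j hj <;>
          · rw [Pi.single_apply, if_neg]
            intro h; subst h; exact absurd hj (by decide)
    | zero => simp
    | add x y _ _ hx hy => intro j hj; simp [hx j hj, hy j hj]
    | smul a x _ hx => intro j hj; simp [hx j hj]
  have h1 : lcs8 s 1 = W := by
    apply le_antisymm
    · rw [show lcs8 s 1 = Submodule.span ℝ
          {z : Fin 8 → ℝ | ∃ u : Fin 8 → ℝ, ∃ v ∈ lcs8 s 0, z = bracket8 s u v}
        from rfl]
      rw [Submodule.span_le]
      rintro z ⟨u, v, -, rfl⟩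
      exact Submodule.sum_mem _ fun i _ => Submodule.sum_mem _ fun j _ =>
        Submodule.smul_mem _ _ (bb_memW i j)
    · rw [hWdef, Submodule.span_le]
      have mk : ∀ (a b : Fin 8) (c : ℝ) (k : Fin 8),
          (Pi.single k 1 : Fin 8 → ℝ) = bracket8 s (Pi.single a c) (Pi.single b 1) →
          (Pi.single k 1 : Fin 8 → ℝ) ∈ lcs8 s 1 :=
        fun a b c k h => Submodule.subset_span
          ⟨Pi.single a c, Pi.single b 1, Submodule.mem_top, h⟩
      rintro z (rfl|rfl|rfl|rfl|rfl)
      · exact mk 1 2 (Real.exp s) 3 (by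
          rw [brk_single]; simp [bb8, sc8, smul_smul, ← Real.exp_add])
      · exact mk 0 2 (Real.exp (-s)) 4 (by
          rw [brk_single]; simp [bb8, sc8, smul_smul, ← Real.exp_add])
      · exact mk 0 1 1 5 (by rw [brk_single]; simp [bb8, sc8])
      · exact mk 2 3 (Real.exp s) 6 (by
          rw [brk_single]; simp [bb8, sc8, smul_smul, ← Real.exp_add])
      · exact mk 1 3 1 7 (by rw [brk_single]; simp [bb8, sc8])
  have h2 : lcs8 s 2 = V := by
    apply le_antisymm
    · rw [show lcs8 s 2 = Submodule.span ℝ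
          {z : Fin 8 → ℝ | ∃ u : Fin 8 → ℝ, ∃ v ∈ lcs8 s 1, z = bracket8 s u v}
        from rfl]
      rw [Submodule.span_le]
      rintro z ⟨u, v, hv, rfl⟩
      rw [h1] at hv
      obtain ⟨h0, ha, hb⟩ := hWv v hv
      apply Submodule.sum_mem _ fun i _ => Submodule.sum_mem _ fun j _ => ?_
      by_cases hj : 3 ≤ j.val
      · exact Submodule.smul_mem _ _ (bb_memV i j hj)
      · have : v j = 0 := by
          fin_cases j <;> simp_all
        simp [this]
    · rw [hVdef, Submodule.span_le]
      have mk : ∀ (a b : Fin 8) (c : ℝ) (k : Fin 8),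
          (Pi.single b 1 : Fin 8 → ℝ) ∈ W →
          (Pi.single k 1 : Fin 8 → ℝ) = bracket8 s (Pi.single a c) (Pi.single b 1) →
          (Pi.single k 1 : Fin 8 → ℝ) ∈ lcs8 s 2 :=
        fun a b c k hb h => Submodule.subset_span
          ⟨Pi.single a c, Pi.single b 1, h1 ▸ hb, h⟩
      rintro z (rfl|rfl)
      · exact mk 1 5 (Real.exp (-s)) 6 (Submodule.subset_span (by simp)) (by
          rw [brk_single]; simp [bb8, sc8, smul_smul, ← Real.exp_add])
      · exact mk 1 3 1 7 (Submodule.subset_span (by simp)) (by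
          rw [brk_single]; simp [bb8, sc8])
  have h3 : lcs8 s 3 = ⊥ := by
    rw [show lcs8 s 3 = Submodule.span ℝ
        {z : Fin 8 → ℝ | ∃ u : Fin 8 → ℝ, ∃ v ∈ lcs8 s 2, z = bracket8 s u v}
      from rfl]
    rw [← le_bot_iff, Submodule.span_le]
    rintro z ⟨u, v, hv, rfl⟩
    rw [h2] at hv
    have hz : ∀ j : Fin 8, j.val ≤ 5 → v j = 0 := hVv v hv
    simp only [SetLike.mem_coe, Submodule.mem_bot, bracket8]
    apply Finset.sum_eq_zero; intro i _
    apply Finset.sum_eq_zero; intro j _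
    by_cases hj : 6 ≤ j.val
    · rw [bb_zero i j hj, smul_zero]
    · rw [hz j (by omega), mul_zero, zero_smul]
  exact ⟨h1, h2, h3⟩
end

section
/- For each real s, the linear map D on the 8-dimensional Lie algebra n_s defined by D(x)=kx for x in V_k, where V₁ = span{x₁,x₂,x₃}, V₂ = span{x₄,x₅,x₆}, V₃ = span{x₇,x₈}, is a derivation of n_s, and [V_i,V_j] ⊆ V_{i+j} (with V_k=0 for k>3), so the V_i define an ℕ-grading of n_s. -/
/-- The grading subspaces of `n_s`: `V 1 = span{x₁,x₂,x₃}`, `V 2 = span{x₄,x₅,x₆}`,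
`V 3 = span{x₇,x₈}`, and `V k = 0` otherwise. -/
noncomputable def V8 : ℕ → Submodule ℝ (Fin 8 → ℝ)
  | 1 => Submodule.span ℝ
      ({Pi.single 0 1, Pi.single 1 1, Pi.single 2 1} : Set (Fin 8 → ℝ))
  | 2 => Submodule.span ℝ
      ({Pi.single 3 1, Pi.single 4 1, Pi.single 5 1} : Set (Fin 8 → ℝ))
  | 3 => Submodule.span ℝ
      ({Pi.single 6 1, Pi.single 7 1} : Set (Fin 8 → ℝ))
  | _ => ⊥

/-- The diagonal map `D(x) = k x` for `x ∈ V_k`. -/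
noncomputable def D8 : (Fin 8 → ℝ) → (Fin 8 → ℝ) := fun v i =>
  (if (i : ℕ) < 3 then (1 : ℝ) else if (i : ℕ) < 6 then 2 else 3) * v i

open Real in
set_option maxHeartbeats 1000000 in
lemma br_eq (s : ℝ) (u v : Fin 8 → ℝ) : bracket8 s u v =
      (exp (-s) * (u 1 * v 2 - u 2 * v 1)) • (Pi.single 3 1 : Fin 8 → ℝ)
    + (exp s * (u 0 * v 2 - u 2 * v 0)) • (Pi.single 4 1 : Fin 8 → ℝ)
    + (u 0 * v 1 - u 1 * v 0) • (Pi.single 5 1 : Fin 8 → ℝ)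
    + (exp s * (u 1 * v 5 - u 5 * v 1) + exp (-s) * (u 2 * v 3 - u 3 * v 2)) •
        (Pi.single 6 1 : Fin 8 → ℝ)
    + (exp (-s) * (u 0 * v 5 - u 5 * v 0) + (u 1 * v 3 - u 3 * v 1)
        + exp s * (u 2 * v 4 - u 4 * v 2)) • (Pi.single 7 1 : Fin 8 → ℝ) := by
  funext k
  fin_cases k <;>
    simp [bracket8, Fin.sum_univ_eight, bb8, sc8, Pi.single_apply] <;> ring

lemma D8_add (x y : Fin 8 → ℝ) : D8 (x + y) = D8 x + D8 y := by
  funext k; simp only [D8, Pi.add_apply]; split_ifs <;> ring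

lemma D8_smul_single (c : ℝ) (m : Fin 8) :
    D8 (c • (Pi.single m 1 : Fin 8 → ℝ)) =
      ((if (m : ℕ) < 3 then (1 : ℝ) else if (m : ℕ) < 6 then 2 else 3) * c) •
        (Pi.single m 1 : Fin 8 → ℝ) := by
  funext k
  rcases eq_or_ne k m with h | h
  · subst h; simp [D8, Pi.single_apply]; try ring
  · simp [D8, Pi.single_eq_of_ne h]

lemma br_add_left (s : ℝ) (u u' v : Fin 8 → ℝ) :
    bracket8 s (u + u') v = bracket8 s u v + bracket8 s u' v := by
  simp [bracket8, add_mul, add_smul, Finset.sum_add_distrib]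

lemma br_add_right (s : ℝ) (u v v' : Fin 8 → ℝ) :
    bracket8 s u (v + v') = bracket8 s u v + bracket8 s u v' := by
  simp [bracket8, mul_add, add_smul, Finset.sum_add_distrib]

lemma br_smul_left (s c : ℝ) (u v : Fin 8 → ℝ) :
    bracket8 s (c • u) v = c • bracket8 s u v := by
  simp [bracket8, Finset.smul_sum, smul_smul, mul_assoc]

lemma br_smul_right (s c : ℝ) (u v : Fin 8 → ℝ) :
    bracket8 s u (c • v) = c • bracket8 s u v := by
  simp [bracket8, Finset.smul_sum, smul_smul, mul_assoc, mul_left_comm]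

lemma br_zero_left (s : ℝ) (v : Fin 8 → ℝ) : bracket8 s 0 v = 0 := by
  simp [bracket8]

lemma br_zero_right (s : ℝ) (u : Fin 8 → ℝ) : bracket8 s u 0 = 0 := by
  simp [bracket8]

lemma span_pair_mem (s : ℝ) (S T : Set (Fin 8 → ℝ)) (W : Submodule ℝ (Fin 8 → ℝ))
    (h : ∀ x ∈ S, ∀ y ∈ T, bracket8 s x y ∈ W) :
    ∀ u ∈ Submodule.span ℝ S, ∀ v ∈ Submodule.span ℝ T, bracket8 s u v ∈ W := by
  intro u hu
  induction hu using Submodule.span_induction with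
  | mem x hx =>
      intro v hv
      induction hv using Submodule.span_induction with
      | mem y hy => exact h x hx y hy
      | zero => rw [br_zero_right]; exact W.zero_mem
      | add y z _ _ hy hz => rw [br_add_right]; exact W.add_mem hy hz
      | smul c y _ hy => rw [br_smul_right]; exact W.smul_mem c hy
  | zero => intro v hv; rw [br_zero_left]; exact W.zero_mem
  | add x y _ _ hx hy => intro v hv; rw [br_add_left]; exact W.add_mem (hx v hv) (hy v hv)
  | smul c x _ hx => intro v hv; rw [br_smul_left]; exact W.smul_mem c (hx v hv)

/-- `D8` is a derivation of `n_s` and the `V_k` define an ℕ-grading: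
`[Vᵢ, Vⱼ] ⊆ V_{i+j}`. -/
theorem stmt6 (s : ℝ) :
    (∀ u v : Fin 8 → ℝ,
        D8 (bracket8 s u v) = bracket8 s (D8 u) v + bracket8 s u (D8 v)) ∧
    (∀ i j : ℕ, ∀ u ∈ V8 i, ∀ v ∈ V8 j, bracket8 s u v ∈ V8 (i + j)) := by
  have c0 : ((0 : Fin 8) : ℕ) = 0 := rfl
  have c1 : ((1 : Fin 8) : ℕ) = 1 := rfl
  have c2 : ((2 : Fin 8) : ℕ) = 2 := rfl
  have c3 : ((3 : Fin 8) : ℕ) = 3 := rfl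
  have c4 : ((4 : Fin 8) : ℕ) = 4 := rfl
  have c5 : ((5 : Fin 8) : ℕ) = 5 := rfl
  have c6 : ((6 : Fin 8) : ℕ) = 6 := rfl
  have c7 : ((7 : Fin 8) : ℕ) = 7 := rfl
  constructor
  · intro u v
    rw [br_eq s u v, br_eq s (D8 u) v, br_eq s u (D8 v)]
    simp only [D8_add, D8_smul_single, D8, c0, c1, c2, c3, c4, c5, c6, c7]
    norm_num
    module
  · have hbot : ∀ (n : ℕ), n ≠ 1 → n ≠ 2 → n ≠ 3 → V8 n = ⊥ := by
      intro n h1 h2 h3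
      match n with
      | 0 => rfl
      | 1 => exact absurd rfl h1
      | 2 => exact absurd rfl h2
      | 3 => exact absurd rfl h3
      | (n+4) => rfl
    intro i j u hu v hv
    by_cases hi : i = 1 ∨ i = 2 ∨ i = 3
    · by_cases hj : j = 1 ∨ j = 2 ∨ j = 3
      · rcases hi with rfl | rfl | rfl <;> rcases hj with rfl | rfl | rfl <;>
        · refine span_pair_mem s _ _ _ (fun x hx y hy => ?_) u hu v hv
          simp only [Set.mem_insert_iff, Set.mem_singleton_iff] at hx hy
          rcases hx with rfl | rfl | rfl <;> rcases hy with rfl | rfl | rfl <;>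
          · rw [br_eq]
            simp [Pi.single_apply]
            all_goals first
            | exact zero_mem _
            | exact Submodule.smul_mem _ _ (Submodule.subset_span (by simp))
            | exact neg_mem (Submodule.smul_mem _ _ (Submodule.subset_span (by simp)))
            | exact neg_mem (Submodule.subset_span (by simp))
            | exact Submodule.subset_span (by simp)
      · push_neg at hj
        rw [hbot j hj.1 hj.2.1 hj.2.2, Submodule.mem_bot] at hv
        rw [hv, br_zero_right]; exact zero_mem _
    · push_neg at hi
      rw [hbot i hi.1 hi.2.1 hi.2.2, Submodule.mem_bot] at hu
      rw [hu, br_zero_left]; exact zero_mem _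
end

section
/- Let g be a Lie algebra and let i, j be ideals of g with g = i + j (not necessarily direct) and [i,j] = 0. Let π: g → g be a linear projection onto i (π restricted to i is the identity and π(g) = i) compatible with a basis adapted to the decomposition. If D is a derivation of g, then the restriction of π ∘ D to i is a derivation of the Lie algebra i. -/
/-- If `g = i + j` with `i`, `j` commuting ideals, and `π` is a linear projection
onto `i` with kernel contained in `j`, then for any derivation `D` of `g`, the
restriction of `π ∘ D` to `i` is a derivation of `i`. -/
theorem stmt9 (L : Type*) [LieRing L] [LieAlgebra ℝ L]
    (I J : LieIdeal ℝ L)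
    (hsum : I ⊔ J = ⊤)
    (hcomm : ∀ x ∈ I, ∀ y ∈ J, ⁅x, y⁆ = (0 : L))
    (π : L →ₗ[ℝ] L)
    (hπI : ∀ x ∈ I, π x = x)
    (hπrange : ∀ x : L, π x ∈ I)
    (hπker : ∀ y : L, π y = 0 → y ∈ J)
    (D : L →ₗ[ℝ] L)
    (hD : ∀ x y : L, D ⁅x, y⁆ = ⁅D x, y⁆ + ⁅x, D y⁆) :
    ∀ x ∈ I, ∀ y ∈ I, π (D ⁅x, y⁆) = ⁅π (D x), y⁆ + ⁅x, π (D y)⁆ := by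
  intro x hx y hy
  have hJ : ∀ z : L, D z - π (D z) ∈ J := by
    intro z
    apply hπker
    rw [map_sub, hπI _ (hπrange (D z)), sub_self]
  have hcomm' : ∀ a ∈ J, ∀ b ∈ I, ⁅a, b⁆ = (0 : L) := by
    intro a ha b hb
    rw [← lie_skew, hcomm b hb a ha, neg_zero]
  have h1 : ⁅D x, y⁆ = ⁅π (D x), y⁆ := by
    have h := hcomm' _ (hJ x) y hy
    rw [sub_lie, sub_eq_zero] at h
    exact h
  have h2 : ⁅x, D y⁆ = ⁅x, π (D y)⁆ := by
    have h := hcomm x hx _ (hJ y)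
    rw [lie_sub, sub_eq_zero] at h
    exact h
  have hI : ⁅π (D x), y⁆ + ⁅x, π (D y)⁆ ∈ I :=
    I.add_mem (lie_mem_left ℝ L I _ _ (hπrange (D x))) (lie_mem_left ℝ L I x _ hx)
  rw [hD x y, h1, h2, hπI _ hI]
end
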